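/- Fix b > 0, λ > 0, and shape parameters 0 < a < 1 < a' < ∞. Then for every ε > 0, ∫₀^ε e^{-λ u} π_RSB(u; a, b) du / ∫₀^ε e^{-λ u} π_RSB(u; a', b) du ≥ (B(a', b) / B(a, b)) · (log(1+ε))^{a - a'} / ( e^{λ ε} (1+ε) (1 + log(1+ε))^{a+b} ). In particular, since a - a' < 0, this ratio tends to ∞ as ε → 0+. -/

import Mathlib

open MeasureTheory Set Filter

/-- The Beta function `B(a,b) = Γ(a)Γ(b)/Γ(a+b)`. -/
noncomputable def betaFn (a b : ℝ) : ℝ :=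
  Real.Gamma a * Real.Gamma b / Real.Gamma (a + b)

/-- The rescaled beta (RSB) density
`π_RSB(u; a, b) = (1/B(a,b)) (log(1+u))^{a-1} (1+u)^{-1} (1+log(1+u))^{-(a+b)}`. -/
noncomputable def piRSB (a b u : ℝ) : ℝ :=
  (1 / betaFn a b) * (Real.log (1 + u)) ^ (a - 1) * (1 + u)⁻¹ *
    (1 + Real.log (1 + u)) ^ (-(a + b))


lemma betaFn_pos {a b : ℝ} (ha : 0 < a) (hb : 0 < b) : 0 < betaFn a b :=
  div_pos (mul_pos (Real.Gamma_pos_of_pos ha) (Real.Gamma_pos_of_pos hb))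
    (Real.Gamma_pos_of_pos (by linarith))

lemma piRSB_pos {a b u : ℝ} (ha : 0 < a) (hb : 0 < b) (hu : 0 < u) : 0 < piRSB a b u := by
  have hB := betaFn_pos ha hb
  have hL : 0 < Real.log (1 + u) := Real.log_pos (by linarith)
  have h1u : (0:ℝ) < 1 + u := by linarith
  have hM : 0 < 1 + Real.log (1 + u) := by linarith
  unfold piRSB
  positivity

lemma rsb_integrableOn {s b lam ε : ℝ} (hs : 0 < s) (hb : 0 < b) (hlam : 0 ≤ lam)
    (hε : 0 < ε) :
    IntegrableOn (fun u => Real.exp (-(lam * u)) * piRSB s b u) (Set.Ioc 0 ε) := by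
  have hB := betaFn_pos hs hb
  set C : ℝ := (1 / betaFn s b) * ((1 + ε) ^ (1 - s) + 1) with hC
  -- dominating function
  have hg : IntegrableOn (fun u : ℝ => C * u ^ (s - 1)) (Set.Ioc 0 ε) := by
    have := (intervalIntegral.intervalIntegrable_rpow' (r := s - 1) (by linarith)
      (a := 0) (b := ε))
    rw [intervalIntegrable_iff_integrableOn_Ioc_of_le hε.le] at this
    exact this.const_mul C
  -- continuity
  have hcont : ContinuousOn (fun u => Real.exp (-(lam * u)) * piRSB s b u) (Set.Ioc 0 ε) := by
    have h1u : ContinuousOn (fun u : ℝ => 1 + u) (Set.Ioc 0 ε) :=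
      (continuous_const.add continuous_id).continuousOn
    have hlog : ContinuousOn (fun u : ℝ => Real.log (1 + u)) (Set.Ioc 0 ε) :=
      h1u.log (fun x hx => by have := hx.1; positivity)
    have hLpos : ∀ x ∈ Set.Ioc 0 ε, 0 < Real.log (1 + x) :=
      fun x hx => Real.log_pos (by linarith [hx.1])
    refine ContinuousOn.mul ?_ ?_
    · exact (Real.continuous_exp.comp ((continuous_const.mul continuous_id).neg)).continuousOn
    · unfold piRSB
      refine ((continuousOn_const.mul (hlog.rpow_const
          (fun x hx => Or.inl (ne_of_gt (hLpos x hx))))).mul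
          (h1u.inv₀ (fun x hx => by have := hx.1; positivity))).mul
          ((continuousOn_const.add hlog).rpow_const
          (fun x hx => Or.inl (by have := hLpos x hx; exact ne_of_gt (by simp only [Pi.add_apply]; linarith))))
  refine hg.mono' (hcont.aestronglyMeasurable measurableSet_Ioc) ?_
  rw [ae_restrict_iff' measurableSet_Ioc]
  refine Filter.Eventually.of_forall (fun u hu => ?_)
  obtain ⟨hu0, huε⟩ := hu
  have h1u : (0:ℝ) < 1 + u := by linarith
  have hL : 0 < Real.log (1 + u) := Real.log_pos (by linarith)
  have hM : (1:ℝ) ≤ 1 + Real.log (1 + u) := by linarith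
  have hfpos : 0 ≤ Real.exp (-(lam * u)) * piRSB s b u :=
    le_of_lt (mul_pos (Real.exp_pos _) (piRSB_pos hs hb hu0))
  rw [Real.norm_eq_abs, abs_of_nonneg hfpos]
  -- bound each factor
  have hexp : Real.exp (-(lam * u)) ≤ 1 := by
    rw [Real.exp_le_one_iff]
    nlinarith
  have hinv : (1 + u)⁻¹ ≤ 1 := by
    rw [inv_le_one_iff₀]; right; linarith
  have hMle : (1 + Real.log (1 + u)) ^ (-(s + b)) ≤ 1 :=
    Real.rpow_le_one_of_one_le_of_nonpos hM (by linarith)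
  have hLbound : Real.log (1 + u) ^ (s - 1) ≤ ((1 + ε) ^ (1 - s) + 1) * u ^ (s - 1) := by
    have hup : 0 ≤ u ^ (s - 1) := Real.rpow_nonneg hu0.le _
    rcases le_or_gt s 1 with hs1 | hs1
    · -- log(1+u) ≥ u/(1+ε)
      have hlow : u / (1 + ε) ≤ Real.log (1 + u) := by
        have h1 : 1 - (1 + u)⁻¹ ≤ Real.log (1 + u) := Real.one_sub_inv_le_log_of_pos h1u
        have h2 : u / (1 + ε) ≤ 1 - (1 + u)⁻¹ := by
          have he : 1 - (1 + u)⁻¹ = u / (1 + u) := by field_simp; ring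
          rw [he]
          gcongr
        linarith
      have hq : 0 < u / (1 + ε) := by positivity
      have := Real.rpow_le_rpow_of_nonpos hq hlow (by linarith : s - 1 ≤ 0)
      have hdiv : (u / (1 + ε)) ^ (s - 1) = u ^ (s - 1) * (1 + ε) ^ (1 - s) := by
        rw [Real.div_rpow hu0.le (by linarith : (0:ℝ) ≤ 1 + ε), div_eq_mul_inv,
          ← Real.rpow_neg (by linarith : (0:ℝ) ≤ 1 + ε), neg_sub]
      nlinarith [this, hdiv ▸ this]
    · have hLu : Real.log (1 + u) ≤ u := by
        have := Real.log_le_sub_one_of_pos h1u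
        linarith
      have := Real.rpow_le_rpow hL.le hLu (by linarith : 0 ≤ s - 1)
      have hpow : (0:ℝ) ≤ (1 + ε) ^ (1 - s) := Real.rpow_nonneg (by linarith) _
      nlinarith
  calc Real.exp (-(lam * u)) * piRSB s b u
      ≤ 1 * piRSB s b u := by
        have := piRSB_pos hs hb hu0
        nlinarith
    _ = piRSB s b u := one_mul _
    _ ≤ (1 / betaFn s b) * (Real.log (1 + u)) ^ (s - 1) := by
        unfold piRSB
        have hLp : 0 ≤ (Real.log (1 + u)) ^ (s - 1) := Real.rpow_nonneg hL.le _
        have hMp : 0 ≤ (1 + Real.log (1 + u)) ^ (-(s + b)) := Real.rpow_nonneg (by linarith) _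
        have hinv0 : 0 ≤ (1 + u)⁻¹ := by positivity
        have hB' : 0 ≤ 1 / betaFn s b := by positivity
        have hX0 : 0 ≤ 1 / betaFn s b * Real.log (1 + u) ^ (s - 1) := mul_nonneg hB' hLp
        have s1 : 1 / betaFn s b * Real.log (1 + u) ^ (s - 1) * (1 + u)⁻¹ *
            (1 + Real.log (1 + u)) ^ (-(s + b)) ≤
            1 / betaFn s b * Real.log (1 + u) ^ (s - 1) * (1 + u)⁻¹ * 1 :=
          mul_le_mul_of_nonneg_left hMle (mul_nonneg hX0 hinv0)
        have s2 : 1 / betaFn s b * Real.log (1 + u) ^ (s - 1) * (1 + u)⁻¹ ≤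
            1 / betaFn s b * Real.log (1 + u) ^ (s - 1) * 1 :=
          mul_le_mul_of_nonneg_left hinv hX0
        simp only [mul_one] at s1 s2
        linarith
    _ ≤ C * u ^ (s - 1) := by
        rw [hC, mul_assoc]
        exact mul_le_mul_of_nonneg_left hLbound (by positivity)

/-- For `0 < a < 1 < a'`, the ratio of truncated Laplace-type integrals of RSB
densities with shapes `a` and `a'` is bounded below by an explicit quantity that
diverges as `ε → 0⁺`. -/
theorem rsb_truncated_ratio_lower_bound (a a' b lam : ℝ) (hb : 0 < b) (hlam : 0 < lam)
    (ha : 0 < a) (ha1 : a < 1) (ha' : 1 < a') :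
    (∀ ε : ℝ, 0 < ε →
      (∫ u in Set.Ioo (0 : ℝ) ε, Real.exp (-(lam * u)) * piRSB a b u) /
          (∫ u in Set.Ioo (0 : ℝ) ε, Real.exp (-(lam * u)) * piRSB a' b u)
        ≥ (betaFn a' b / betaFn a b) * (Real.log (1 + ε)) ^ (a - a') /
            (Real.exp (lam * ε) * (1 + ε) * (1 + Real.log (1 + ε)) ^ (a + b)))
    ∧ Filter.Tendsto
        (fun ε : ℝ =>
          (∫ u in Set.Ioo (0 : ℝ) ε, Real.exp (-(lam * u)) * piRSB a b u) /
            (∫ u in Set.Ioo (0 : ℝ) ε, Real.exp (-(lam * u)) * piRSB a' b u))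
        (nhdsWithin 0 (Set.Ioi 0)) Filter.atTop := by
  have ha'0 : 0 < a' := by linarith
  have hB := betaFn_pos ha hb
  have hB' := betaFn_pos ha'0 hb
  set K : ℝ → ℝ := fun ε => betaFn a' b / betaFn a b * Real.log (1 + ε) ^ (a - a') with hKdef
  -- key intermediate bound: ratio ≥ K ε
  have key : ∀ ε : ℝ, 0 < ε →
      K ε ≤ (∫ u in Set.Ioo (0 : ℝ) ε, Real.exp (-(lam * u)) * piRSB a b u) /
          (∫ u in Set.Ioo (0 : ℝ) ε, Real.exp (-(lam * u)) * piRSB a' b u) := by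
    intro ε hε
    have hnum : IntegrableOn (fun u => Real.exp (-(lam * u)) * piRSB a b u) (Set.Ioo 0 ε) :=
      (rsb_integrableOn ha hb hlam.le hε).mono_set Set.Ioo_subset_Ioc_self
    have hden : IntegrableOn (fun u => Real.exp (-(lam * u)) * piRSB a' b u) (Set.Ioo 0 ε) :=
      (rsb_integrableOn ha'0 hb hlam.le hε).mono_set Set.Ioo_subset_Ioc_self
    have hden_pos : 0 < ∫ u in Set.Ioo (0 : ℝ) ε, Real.exp (-(lam * u)) * piRSB a' b u := by
      rw [← integral_Ioc_eq_integral_Ioo, ← intervalIntegral.integral_of_le hε.le]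
      refine intervalIntegral.intervalIntegral_pos_of_pos_on ?_ ?_ hε
      · rw [intervalIntegrable_iff_integrableOn_Ioc_of_le hε.le]
        exact rsb_integrableOn ha'0 hb hlam.le hε
      · exact fun x hx => mul_pos (Real.exp_pos _) (piRSB_pos ha'0 hb hx.1)
    -- pointwise bound
    have hpt : ∀ u ∈ Set.Ioo (0 : ℝ) ε,
        K ε * (Real.exp (-(lam * u)) * piRSB a' b u) ≤
          Real.exp (-(lam * u)) * piRSB a b u := by
      intro u hu
      obtain ⟨hu0, huε⟩ := hu
      have h1u : (0:ℝ) < 1 + u := by linarith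
      have hL : 0 < Real.log (1 + u) := Real.log_pos (by linarith)
      have hLe : Real.log (1 + u) ≤ Real.log (1 + ε) :=
        Real.log_le_log (by linarith) (by linarith)
      have hM : (1:ℝ) ≤ 1 + Real.log (1 + u) := by linarith
      have step1 : Real.log (1 + ε) ^ (a - a') ≤ Real.log (1 + u) ^ (a - a') :=
        Real.rpow_le_rpow_of_nonpos hL hLe (by linarith)
      have step2 : (1 + Real.log (1 + u)) ^ (-(a' + b)) ≤
          (1 + Real.log (1 + u)) ^ (-(a + b)) :=
        Real.rpow_le_rpow_of_exponent_le hM (by linarith)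
      have hrw : Real.log (1 + u) ^ (a - 1) =
          Real.log (1 + u) ^ (a - a') * Real.log (1 + u) ^ (a' - 1) := by
        rw [← Real.rpow_add hL]; ring_nf
      have hpre : 0 ≤ 1 / betaFn a b * Real.log (1 + u) ^ (a' - 1) *
          Real.exp (-(lam * u)) * (1 + u)⁻¹ := by positivity
      have hmul : Real.log (1 + ε) ^ (a - a') * (1 + Real.log (1 + u)) ^ (-(a' + b)) ≤
          Real.log (1 + u) ^ (a - a') * (1 + Real.log (1 + u)) ^ (-(a + b)) :=
        mul_le_mul step1 step2 (Real.rpow_nonneg (by linarith) _)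
          (Real.rpow_nonneg hL.le _)
      have expand1 : K ε * (Real.exp (-(lam * u)) * piRSB a' b u) =
          (1 / betaFn a b * Real.log (1 + u) ^ (a' - 1) *
            Real.exp (-(lam * u)) * (1 + u)⁻¹) *
          (Real.log (1 + ε) ^ (a - a') * (1 + Real.log (1 + u)) ^ (-(a' + b))) := by
        rw [hKdef]
        unfold piRSB
        field_simp
      have expand2 : Real.exp (-(lam * u)) * piRSB a b u =
          (1 / betaFn a b * Real.log (1 + u) ^ (a' - 1) *
            Real.exp (-(lam * u)) * (1 + u)⁻¹) *
          (Real.log (1 + u) ^ (a - a') * (1 + Real.log (1 + u)) ^ (-(a + b))) := by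
        unfold piRSB
        rw [hrw]
        ring
      rw [expand1, expand2]
      exact mul_le_mul_of_nonneg_left hmul hpre
    have hint : K ε * (∫ u in Set.Ioo (0 : ℝ) ε, Real.exp (-(lam * u)) * piRSB a' b u) ≤
        ∫ u in Set.Ioo (0 : ℝ) ε, Real.exp (-(lam * u)) * piRSB a b u := by
      rw [← integral_const_mul]
      exact setIntegral_mono_on (hden.const_mul _) hnum measurableSet_Ioo hpt
    exact (le_div_iff₀ hden_pos).mpr hint
  constructor
  · intro ε hε
    have hKε : 0 ≤ K ε := by
      have : 0 ≤ Real.log (1 + ε) ^ (a - a') := Real.rpow_nonneg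
        (Real.log_nonneg (by linarith)) _
      positivity
    have hD : 1 ≤ Real.exp (lam * ε) * (1 + ε) * (1 + Real.log (1 + ε)) ^ (a + b) := by
      have h1 : (1:ℝ) ≤ Real.exp (lam * ε) := Real.one_le_exp (by positivity)
      have h2 : (1:ℝ) ≤ 1 + ε := by linarith
      have h3 : (1:ℝ) ≤ (1 + Real.log (1 + ε)) ^ (a + b) :=
        Real.one_le_rpow (by linarith [Real.log_nonneg (by linarith : (1:ℝ) ≤ 1 + ε)])
          (by linarith)
      have h12 : (1:ℝ) ≤ Real.exp (lam * ε) * (1 + ε) := by nlinarith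
      have := mul_le_mul h12 h3 zero_le_one
        (by positivity : (0:ℝ) ≤ Real.exp (lam * ε) * (1 + ε))
      nlinarith
    calc betaFn a' b / betaFn a b * Real.log (1 + ε) ^ (a - a') /
            (Real.exp (lam * ε) * (1 + ε) * (1 + Real.log (1 + ε)) ^ (a + b))
        ≤ K ε := div_le_self hKε hD
      _ ≤ _ := key ε hε
  · have hev : K ≤ᶠ[nhdsWithin (0:ℝ) (Set.Ioi 0)]
        (fun ε : ℝ =>
          (∫ u in Set.Ioo (0 : ℝ) ε, Real.exp (-(lam * u)) * piRSB a b u) /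
            (∫ u in Set.Ioo (0 : ℝ) ε, Real.exp (-(lam * u)) * piRSB a' b u)) :=
      eventually_mem_nhdsWithin.mono (fun ε hε => key ε hε)
    refine tendsto_atTop_mono' _ hev ?_
    -- K tends to atTop
    have hc : 0 < betaFn a' b / betaFn a b := by positivity
    have hlog : Tendsto (fun ε : ℝ => Real.log (1 + ε)) (nhdsWithin 0 (Set.Ioi 0))
        (nhdsWithin 0 (Set.Ioi 0)) := by
      apply tendsto_nhdsWithin_of_tendsto_nhds_of_eventually_within
      · have : Tendsto (fun ε : ℝ => Real.log (1 + ε)) (nhds 0) (nhds (Real.log (1 + 0))) :=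
          ((Real.continuousAt_log (by norm_num)).comp
            (continuous_const.add continuous_id).continuousAt)
        simpa using this.mono_left nhdsWithin_le_nhds
      · exact eventually_mem_nhdsWithin.mono
          (fun ε hε => Real.log_pos (by simpa using by linarith [Set.mem_Ioi.mp hε]))
    have hrpow : Tendsto (fun x : ℝ => x ^ (a - a')) (nhdsWithin 0 (Set.Ioi 0)) atTop := by
      have h1 : Tendsto (fun x : ℝ => x ^ (a' - a)) (nhdsWithin 0 (Set.Ioi 0))
          (nhdsWithin 0 (Set.Ioi 0)) := by
        apply tendsto_nhdsWithin_of_tendsto_nhds_of_eventually_within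
        · have hca : ContinuousAt (fun x : ℝ => x ^ (a' - a)) 0 :=
            Real.continuousAt_rpow_const 0 (a' - a) (Or.inr (by linarith))
          have := hca.tendsto.mono_left (nhdsWithin_le_nhds (s := Set.Ioi (0:ℝ)))
          simpa [Real.zero_rpow (by linarith : a' - a ≠ 0)] using this
        · exact eventually_mem_nhdsWithin.mono
            (fun x hx => Real.rpow_pos_of_pos (Set.mem_Ioi.mp hx) _)
      have h2 := h1.inv_tendsto_nhdsGT_zero
      refine h2.congr' ?_
      filter_upwards [eventually_mem_nhdsWithin] with x hx
      rw [Pi.inv_apply, ← Real.rpow_neg (le_of_lt (Set.mem_Ioi.mp hx))]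
      ring_nf
    simpa [hKdef, Function.comp] using (hrpow.comp hlog).const_mul_atTop hc
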